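/- For every function k : ℕ → ℕ with 2 ≤ k(n) and n ≥ 2k(n), the following holds asymptotically almost surely for the random Kneser graph KG_{n,k(n)}(1/2): for every integer b with 1 ≤ b ≤ n, every b-element subset B ⊆ [n], and every family A of k(n)-element subsets of B that is an independent set in KG_{n,k(n)}(1/2), the number e(A) of unordered pairs of disjoint sets in A satisfies e(A) ≤ 2·( |A|·k(n)·log₂ b + b·log₂ n ). -/

import Mathlib

open Filter

/-- The Kneser graph `KG_{n,k}`: vertices are the `k`-element subsets of `[n]`,
with edges connecting pairs of disjoint sets. -/
def kneserGraph (n k : ℕ) : SimpleGraph {A : Finset (Fin n) // A.card = k} where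
  Adj A B := A ≠ B ∧ Disjoint A.1 B.1
  symm := ⟨fun _ _ h => ⟨h.1.symm, h.2.symm⟩⟩
  loopless := ⟨fun _ h => h.1 rfl⟩

/-- The fraction of spanning subgraphs of `kneserGraph n (k n)` satisfying `P n`. -/
noncomputable def kneserFraction (k : ℕ → ℕ)
    (P : (n : ℕ) → SimpleGraph {A : Finset (Fin n) // A.card = k n} → Prop) (n : ℕ) : ℝ :=
  (Nat.card {G : SimpleGraph {A : Finset (Fin n) // A.card = k n} //
      G ≤ kneserGraph n (k n) ∧ P n G} : ℝ) /
    2 ^ (Nat.card (kneserGraph n (k n)).edgeSet)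

/-- `KG_{n, k(n)}(1/2)` asymptotically almost surely satisfies `P`. -/
def kneserAAS (k : ℕ → ℕ)
    (P : (n : ℕ) → SimpleGraph {A : Finset (Fin n) // A.card = k n} → Prop) : Prop :=
  Tendsto (kneserFraction k P) atTop (nhds 1)

/-- `e(𝒜)`: the number of unordered pairs of disjoint sets in a family `𝒜` of vertices
of a Kneser graph. -/
noncomputable def numDisjPairs {n k : ℕ} (𝒜 : Finset {A : Finset (Fin n) // A.card = k}) : ℕ :=
  {p : Sym2 {A : Finset (Fin n) // A.card = k} |
    ∃ F ∈ 𝒜, ∃ F' ∈ 𝒜, F ≠ F' ∧ Disjoint F.1 F'.1 ∧ p = s(F, F')}.ncard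

/- ### Auxiliary lemmas -/
lemma card_subgraphs_edgeSet_subset {V : Type*} [Finite V] (H : SimpleGraph V)
    (s : Set (Sym2 V)) (hs : s ⊆ H.edgeSet) :
    Nat.card {G : SimpleGraph V // G.edgeSet ⊆ s} = 2 ^ (Nat.card s) := by
  classical
  have hnd : ∀ t ⊆ s, t \ {e : Sym2 V | e.IsDiag} = t := by
    intro t ht
    ext e; simp only [Set.mem_diff, Set.mem_setOf_eq, and_iff_left_iff_imp]
    intro he; exact H.not_isDiag_of_mem_edgeSet (hs (ht he))
  have e1 : {G : SimpleGraph V // G.edgeSet ⊆ s} ≃ {t : Set (Sym2 V) // t ⊆ s} :=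
    { toFun := fun G => ⟨G.1.edgeSet, G.2⟩
      invFun := fun t => ⟨SimpleGraph.fromEdgeSet t.1, by
        rw [SimpleGraph.edgeSet_fromEdgeSet, Sym2.diagSet, hnd t.1 t.2]; exact t.2⟩
      left_inv := fun G => Subtype.ext (SimpleGraph.fromEdgeSet_edgeSet G.1)
      right_inv := fun t => Subtype.ext (by
        show (SimpleGraph.fromEdgeSet t.1).edgeSet = t.1
        rw [SimpleGraph.edgeSet_fromEdgeSet, Sym2.diagSet, hnd t.1 t.2]) }
  have e2 : {t : Set (Sym2 V) // t ⊆ s} ≃ Set s := Equiv.Set.powerset s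
  rw [Nat.card_congr (e1.trans e2)]
  haveI : Fintype s := Fintype.ofFinite _
  haveI : Fintype (Sym2 V) := Fintype.ofFinite _
  rw [Nat.card_eq_fintype_card, Fintype.card_set, Nat.card_eq_fintype_card]

def disjPairSet {n k : ℕ} (𝒜 : Finset {A : Finset (Fin n) // A.card = k}) :
    Set (Sym2 {A : Finset (Fin n) // A.card = k}) :=
  {p | ∃ F ∈ 𝒜, ∃ F' ∈ 𝒜, F ≠ F' ∧ Disjoint F.1 F'.1 ∧ p = s(F, F')}

lemma numDisjPairs_eq {n k : ℕ} (𝒜 : Finset {A : Finset (Fin n) // A.card = k}) :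
    numDisjPairs 𝒜 = (disjPairSet 𝒜).ncard := rfl

lemma disjPairSet_subset {n k : ℕ} (𝒜 : Finset {A : Finset (Fin n) // A.card = k}) :
    disjPairSet 𝒜 ⊆ (kneserGraph n k).edgeSet := by
  rintro p ⟨F, hF, F', hF', hne, hdisj, rfl⟩
  exact (SimpleGraph.mem_edgeSet _).2 ⟨hne, hdisj⟩

lemma indep_iff {n k : ℕ} (𝒜 : Finset {A : Finset (Fin n) // A.card = k})
    (G : SimpleGraph {A : Finset (Fin n) // A.card = k}) :
    (G ≤ kneserGraph n k ∧ ∀ F ∈ 𝒜, ∀ F' ∈ 𝒜, ¬ G.Adj F F') ↔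
      G.edgeSet ⊆ (kneserGraph n k).edgeSet \ disjPairSet 𝒜 := by
  constructor
  · rintro ⟨hle, hindep⟩ e he
    refine ⟨SimpleGraph.edgeSet_mono hle he, ?_⟩
    rintro ⟨F, hF, F', hF', hne, hdisj, rfl⟩
    exact hindep F hF F' hF' ((SimpleGraph.mem_edgeSet _).1 he)
  · intro h
    have hle : G ≤ kneserGraph n k :=
      SimpleGraph.edgeSet_subset_edgeSet.1 (h.trans Set.diff_subset)
    refine ⟨hle, fun F hF F' hF' hadj => ?_⟩
    have hmem : s(F, F') ∈ G.edgeSet := (SimpleGraph.mem_edgeSet _).2 hadj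
    have hH : (kneserGraph n k).Adj F F' := hle hadj
    exact (h hmem).2 ⟨F, hF, F', hF', hH.1, hH.2, rfl⟩

lemma card_all_subgraphs (n k : ℕ) :
    Nat.card {G : SimpleGraph {A : Finset (Fin n) // A.card = k} // G ≤ kneserGraph n k}
      = 2 ^ (Nat.card (kneserGraph n k).edgeSet) := by
  rw [← card_subgraphs_edgeSet_subset (kneserGraph n k) _ subset_rfl]
  exact Nat.card_congr (Equiv.subtypeEquivRight
    (fun G => (SimpleGraph.edgeSet_subset_edgeSet (G₁ := G) (G₂ := kneserGraph n k)).symm))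

lemma card_indep_subgraphs {n k : ℕ} (𝒜 : Finset {A : Finset (Fin n) // A.card = k}) :
    Nat.card {G : SimpleGraph {A : Finset (Fin n) // A.card = k} //
        G ≤ kneserGraph n k ∧ ∀ F ∈ 𝒜, ∀ F' ∈ 𝒜, ¬ G.Adj F F'}
      = 2 ^ (Nat.card (kneserGraph n k).edgeSet - numDisjPairs 𝒜) := by
  rw [Nat.card_congr (Equiv.subtypeEquivRight (indep_iff 𝒜))]
  rw [card_subgraphs_edgeSet_subset (kneserGraph n k) _ Set.diff_subset]
  congr 1
  rw [Nat.card_coe_set_eq, Nat.card_coe_set_eq,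
    Set.ncard_diff (disjPairSet_subset 𝒜), numDisjPairs_eq]

lemma one_add_pow_le_three {x : ℝ} {m : ℕ} (hx : 0 ≤ x) (h : x * m ≤ 1) : (1+x)^m ≤ 3 := by
  have h1 : (1+x)^m ≤ Real.exp x ^ m := by
    apply pow_le_pow_left₀ (by linarith) (by linarith [Real.add_one_le_exp x])
  have h2 : Real.exp x ^ m = Real.exp (x * m) := by
    rw [mul_comm, Real.exp_nat_mul]
  have h3 : Real.exp (x * m) ≤ Real.exp 1 := Real.exp_le_exp.2 h
  have h4 : Real.exp 1 ≤ 3 := by linarith [Real.exp_one_lt_d9]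
  calc (1+x)^m ≤ Real.exp x ^ m := h1
    _ = Real.exp (x*m) := h2
    _ ≤ 3 := le_trans h3 h4

lemma sum_powerset_pow (x : ℝ) {α : Type*} [DecidableEq α] (s : Finset α) :
    ∑ t ∈ s.powerset, x ^ t.card = (1+x) ^ s.card := by
  have := Finset.prod_add (fun _ : α => x) (fun _ => 1) s
  simp only [Finset.prod_const, one_pow, mul_one] at this
  rw [← this, add_comm]

lemma sum_witness_bound (n k : ℕ) (hk2 : 2 ≤ k) (hkn : 2*k ≤ n)
    (W' : Finset (Finset (Fin n) × Finset {A : Finset (Fin n) // A.card = k}))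
    (hW' : ∀ w ∈ W', 4 ≤ w.1.card ∧ 2 ≤ w.2.card ∧ ∀ F ∈ w.2, F.1 ⊆ w.1) :
    ∑ w ∈ W',
      ((w.1.card : ℝ) ^ (-(2 * w.2.card * k : ℝ)) * (n:ℝ) ^ (-(2*w.1.card : ℝ))) ≤
      9 * (n:ℝ) ^ (-(4:ℝ)) := by
  classical
  apply le_trans (Finset.sum_le_sum_of_subset_of_nonneg
    (fun w hw => Finset.mem_filter.2 ⟨Finset.mem_univ _, hW' w hw⟩)
    (fun w _ _ => by positivity))
  have hn4 : (4:ℕ) ≤ n := le_trans (by omega) hkn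
  have hn0 : (0:ℝ) < n := by positivity
  have hn1 : (1:ℝ) ≤ n := by exact_mod_cast le_trans (by norm_num) hn4
  rw [Finset.sum_filter]
  have huniv : (Finset.univ : Finset (Finset (Fin n) × Finset {A : Finset (Fin n) // A.card = k}))
      = Finset.univ ×ˢ Finset.univ := rfl
  rw [huniv, Finset.sum_product]
  -- inner bound
  have inner : ∀ B : Finset (Fin n),
      (∑ 𝒜 : Finset {A : Finset (Fin n) // A.card = k},
        if 4 ≤ B.card ∧ 2 ≤ 𝒜.card ∧ ∀ F ∈ 𝒜, F.1 ⊆ B then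
          ((B.card : ℝ) ^ (-(2 * 𝒜.card * k : ℝ)) * (n:ℝ) ^ (-(2*B.card : ℝ))) else 0) ≤
      (if 4 ≤ B.card then 3 * (n:ℝ) ^ (-(2*B.card : ℝ)) else 0) := by
    intro B
    by_cases hB : 4 ≤ B.card
    · simp only [hB, if_true, true_and]
      set b : ℝ := (B.card : ℝ) with hbdef
      have hb1 : (1:ℝ) ≤ b := by
        have h4 : (4:ℝ) ≤ b := by rw [hbdef]; exact_mod_cast hB
        linarith
      have hb0 : (0:ℝ) ≤ b := by linarith
      set P : Finset {A : Finset (Fin n) // A.card = k} :=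
        Finset.univ.filter (fun F => F.1 ⊆ B) with hP
      set x : ℝ := b ^ (-(k:ℝ)) with hx
      have hx0 : 0 ≤ x := Real.rpow_nonneg hb0 _
      have hstep : ∀ 𝒜 : Finset {A : Finset (Fin n) // A.card = k},
          (if 2 ≤ 𝒜.card ∧ ∀ F ∈ 𝒜, F.1 ⊆ B then
            (b ^ (-(2 * 𝒜.card * k : ℝ)) * (n:ℝ) ^ (-(2*B.card : ℝ))) else 0) ≤
          (if 𝒜 ∈ P.powerset then x ^ 𝒜.card * (n:ℝ) ^ (-(2*B.card : ℝ)) else 0) := by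
        intro 𝒜
        by_cases hmem : 𝒜 ∈ P.powerset
        · simp only [hmem, if_true]
          split_ifs with hc
          · apply mul_le_mul_of_nonneg_right _ (Real.rpow_nonneg (le_of_lt hn0) _)
            have hxpow : x ^ 𝒜.card = b ^ (-(k:ℝ) * 𝒜.card) := by
              rw [hx, ← Real.rpow_natCast (b ^ (-(k:ℝ))) 𝒜.card, ← Real.rpow_mul hb0]
            rw [hxpow]
            apply Real.rpow_le_rpow_of_exponent_le hb1
            have : (0:ℝ) ≤ (𝒜.card : ℝ) * k := by positivity
            nlinarith
          · positivity
        · have hnc : ¬ (2 ≤ 𝒜.card ∧ ∀ F ∈ 𝒜, F.1 ⊆ B) := by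
            intro hc
            exact hmem (Finset.mem_powerset.2 (fun F hF =>
              Finset.mem_filter.2 ⟨Finset.mem_univ _, hc.2 F hF⟩))
          rw [if_neg hnc, if_neg hmem]
      apply le_trans (Finset.sum_le_sum (fun 𝒜 _ => hstep 𝒜))
      rw [Finset.sum_ite_mem, Finset.univ_inter, ← Finset.sum_mul, sum_powerset_pow]
      apply mul_le_mul_of_nonneg_right _ (Real.rpow_nonneg (le_of_lt hn0) _)
      -- (1+x)^P.card ≤ 3
      apply one_add_pow_le_three hx0
      have hPcard : (P.card : ℝ) ≤ b ^ (k:ℕ) := by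
        have h1 : P.card ≤ (B.powersetCard k).card := by
          apply Finset.card_le_card_of_injOn (fun F => F.1)
          · intro F hF
            exact Finset.mem_powersetCard.2 ⟨(Finset.mem_filter.1 hF).2, F.2⟩
          · intro F _ F' _ h
            exact Subtype.ext h
        have h2 : (B.powersetCard k).card = B.card.choose k := Finset.card_powersetCard k B
        have h3 : B.card.choose k ≤ B.card ^ k := Nat.choose_le_pow B.card k
        calc (P.card : ℝ) ≤ ((B.card ^ k : ℕ) : ℝ) := by
              exact_mod_cast le_trans h1 (h2 ▸ h3)
          _ = b ^ (k:ℕ) := by push_cast [hbdef]; ring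
      have hxinv : x = (b ^ (k:ℕ))⁻¹ := by
        rw [hx, Real.rpow_neg hb0, Real.rpow_natCast]
      rw [hxinv, inv_mul_le_iff₀ (by positivity), mul_one]
      exact hPcard
    · simp [hB]
  apply le_trans (Finset.sum_le_sum (fun B _ => inner B))
  -- outer bound
  have outer : ∀ B : Finset (Fin n),
      (if 4 ≤ B.card then 3 * (n:ℝ) ^ (-(2*B.card : ℝ)) else 0) ≤
      3 * (n:ℝ) ^ (-(4:ℝ)) * ((n:ℝ) ^ (-(1:ℝ))) ^ B.card := by
    intro B
    have hrw : ((n:ℝ) ^ (-(1:ℝ))) ^ B.card = (n:ℝ) ^ (-(B.card:ℝ)) := by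
      rw [← Real.rpow_natCast ((n:ℝ) ^ (-(1:ℝ))) B.card, ← Real.rpow_mul (le_of_lt hn0)]
      norm_num
    split_ifs with hB
    · rw [hrw, mul_assoc, ← Real.rpow_add hn0]
      apply mul_le_mul_of_nonneg_left _ (by norm_num)
      apply Real.rpow_le_rpow_of_exponent_le hn1
      have : (4:ℝ) ≤ (B.card : ℝ) := by exact_mod_cast hB
      linarith
    · positivity
  apply le_trans (Finset.sum_le_sum (fun B _ => outer B))
  rw [← Finset.mul_sum]
  have hsum : ∑ B : Finset (Fin n), ((n:ℝ) ^ (-(1:ℝ))) ^ B.card ≤ 3 := by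
    have hps : (Finset.univ : Finset (Finset (Fin n))) = (Finset.univ : Finset (Fin n)).powerset :=
      (Finset.powerset_univ).symm
    rw [hps, sum_powerset_pow]
    apply one_add_pow_le_three (Real.rpow_nonneg (le_of_lt hn0) _)
    rw [Finset.card_univ, Fintype.card_fin, Real.rpow_neg (le_of_lt hn0), Real.rpow_one]
    rw [inv_mul_le_iff₀ hn0]
    norm_num
  calc 3 * (n:ℝ) ^ (-(4:ℝ)) * (∑ B : Finset (Fin n), ((n:ℝ) ^ (-(1:ℝ))) ^ B.card)
      ≤ 3 * (n:ℝ) ^ (-(4:ℝ)) * 3 := by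
        apply mul_le_mul_of_nonneg_left hsum (by positivity)
    _ = 9 * (n:ℝ) ^ (-(4:ℝ)) := by ring

def KP (n k : ℕ) (G : SimpleGraph {A : Finset (Fin n) // A.card = k}) : Prop :=
  ∀ b : ℕ, 1 ≤ b → b ≤ n →
    ∀ B : Finset (Fin n), B.card = b →
      ∀ 𝒜 : Finset {A : Finset (Fin n) // A.card = k},
        (∀ F ∈ 𝒜, F.1 ⊆ B) →
        (∀ F ∈ 𝒜, ∀ F' ∈ 𝒜, ¬ G.Adj F F') →
        (numDisjPairs 𝒜 : ℝ) ≤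
          2 * ((𝒜.card : ℝ) * (k : ℝ) * Real.logb 2 b + (b : ℝ) * Real.logb 2 n)

lemma bad_le (n k : ℕ) (hk2 : 2 ≤ k) (hkn : 2 * k ≤ n) :
    (Nat.card {G : SimpleGraph {A : Finset (Fin n) // A.card = k} //
        G ≤ kneserGraph n k ∧ ¬ KP n k G} : ℝ) ≤
      9 * (n:ℝ) ^ (-(4:ℝ)) * 2 ^ (Nat.card (kneserGraph n k).edgeSet) := by
  classical
  set E := Nat.card (kneserGraph n k).edgeSet with hE
  have hn0 : (0:ℝ) < n := by
    have : (4:ℕ) ≤ n := le_trans (by omega) hkn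
    positivity
  have hn1 : (1:ℝ) ≤ n := by
    have h4 : (4:ℕ) ≤ n := le_trans (by omega) hkn
    exact_mod_cast le_trans (by norm_num) h4
  set W : Finset (Finset (Fin n) × Finset {A : Finset (Fin n) // A.card = k}) :=
    Finset.univ.filter (fun w =>
      (∀ F ∈ w.2, F.1 ⊆ w.1) ∧
      2 * ((w.2.card : ℝ) * (k : ℝ) * Real.logb 2 w.1.card +
        (w.1.card : ℝ) * Real.logb 2 n) < (numDisjPairs w.2 : ℝ) ∧
      1 ≤ w.1.card ∧ w.1.card ≤ n) with hW
  have hbadcard : Nat.card {G : SimpleGraph {A : Finset (Fin n) // A.card = k} //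
      G ≤ kneserGraph n k ∧ ¬ KP n k G} =
      (Finset.univ.filter (fun G : SimpleGraph {A : Finset (Fin n) // A.card = k} =>
        G ≤ kneserGraph n k ∧ ¬ KP n k G)).card := by
    rw [Nat.card_eq_fintype_card, Fintype.card_subtype]
  have hsubset : Finset.univ.filter (fun G : SimpleGraph {A : Finset (Fin n) // A.card = k} =>
      G ≤ kneserGraph n k ∧ ¬ KP n k G) ⊆
      W.biUnion (fun w => Finset.univ.filter
        (fun G : SimpleGraph {A : Finset (Fin n) // A.card = k} =>
          G ≤ kneserGraph n k ∧ ∀ F ∈ w.2, ∀ F' ∈ w.2, ¬ G.Adj F F')) := by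
    intro G hG
    rw [Finset.mem_filter] at hG
    obtain ⟨-, hle, hnP⟩ := hG
    rw [KP] at hnP; push_neg at hnP
    obtain ⟨b, hb1, hbn, B, hBcard, 𝒜, hsub, hindep, hlt⟩ := hnP
    rw [Finset.mem_biUnion]
    refine ⟨(B, 𝒜), ?_, ?_⟩
    · rw [hW, Finset.mem_filter]
      refine ⟨Finset.mem_univ _, hsub, ?_, ?_, ?_⟩
      · rw [hBcard]; exact hlt
      · rw [hBcard]; exact hb1
      · rw [hBcard]; exact hbn
    · rw [Finset.mem_filter]; exact ⟨Finset.mem_univ _, hle, hindep⟩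
  have hcard : (Finset.univ.filter (fun G : SimpleGraph {A : Finset (Fin n) // A.card = k} =>
      G ≤ kneserGraph n k ∧ ¬ KP n k G)).card ≤
      ∑ w ∈ W, (Finset.univ.filter
        (fun G : SimpleGraph {A : Finset (Fin n) // A.card = k} =>
          G ≤ kneserGraph n k ∧ ∀ F ∈ w.2, ∀ F' ∈ w.2, ¬ G.Adj F F')).card :=
    le_trans (Finset.card_le_card hsubset) (Finset.card_biUnion_le)
  -- per-witness real bound
  have hw : ∀ w ∈ W, ((Finset.univ.filter
      (fun G : SimpleGraph {A : Finset (Fin n) // A.card = k} =>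
        G ≤ kneserGraph n k ∧ ∀ F ∈ w.2, ∀ F' ∈ w.2, ¬ G.Adj F F')).card : ℝ) ≤
      (2:ℝ) ^ E * ((w.1.card : ℝ) ^ (-(2 * w.2.card * k : ℝ)) *
        (n:ℝ) ^ (-(2 * w.1.card : ℝ))) := by
    intro w hwW
    rw [hW, Finset.mem_filter] at hwW
    obtain ⟨-, hsub, hlt, hb1, hbn⟩ := hwW
    have hcardeq : (Finset.univ.filter
        (fun G : SimpleGraph {A : Finset (Fin n) // A.card = k} =>
          G ≤ kneserGraph n k ∧ ∀ F ∈ w.2, ∀ F' ∈ w.2, ¬ G.Adj F F')).card =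
        2 ^ (E - numDisjPairs w.2) := by
      rw [← Fintype.card_subtype, ← Nat.card_eq_fintype_card, card_indep_subgraphs]
    rw [hcardeq]
    set e := numDisjPairs w.2 with he
    set b : ℝ := (w.1.card : ℝ) with hb
    set a : ℝ := (w.2.card : ℝ) with ha
    have hb1' : (1:ℝ) ≤ b := by rw [hb]; exact_mod_cast hb1
    have hb0 : (0:ℝ) < b := lt_of_lt_of_le one_pos hb1'
    set T : ℝ := 2 * (a * k * Real.logb 2 b + b * Real.logb 2 n) with hT
    have heE : e ≤ E := by
      rw [he, hE, numDisjPairs_eq, Nat.card_coe_set_eq]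
      exact Set.ncard_le_ncard (disjPairSet_subset w.2) (Set.toFinite _)
    have h1 : ((2 ^ (E - e) : ℕ) : ℝ) = (2:ℝ) ^ ((E - e : ℕ) : ℝ) := by
      rw [Nat.cast_pow, Nat.cast_ofNat, Real.rpow_natCast]
    have h2 : (2:ℝ) ^ ((E - e : ℕ) : ℝ) ≤ (2:ℝ) ^ ((E:ℝ) - (e:ℝ)) := by
      rw [Nat.cast_sub heE]
    have h3 : (2:ℝ) ^ ((E:ℝ) - (e:ℝ)) ≤ (2:ℝ) ^ ((E:ℝ) + (-T)) := by
      apply Real.rpow_le_rpow_of_exponent_le one_le_two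
      have : T ≤ (e:ℝ) := le_of_lt hlt
      linarith
    have h4 : (2:ℝ) ^ ((E:ℝ) + (-T)) = (2:ℝ) ^ (E:ℝ) * (2:ℝ) ^ (-T) :=
      Real.rpow_add two_pos _ _
    have h5 : (2:ℝ) ^ (-T) = b ^ (-(2 * a * k : ℝ)) * (n:ℝ) ^ (-(2 * b : ℝ)) := by
      have hlogb : (2:ℝ) ^ (Real.logb 2 b) = b := Real.rpow_logb two_pos (by norm_num) hb0
      have hlogn : (2:ℝ) ^ (Real.logb 2 n) = (n:ℝ) := Real.rpow_logb two_pos (by norm_num) hn0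
      have : -T = Real.logb 2 b * (-(2 * a * k)) + Real.logb 2 n * (-(2 * b)) := by
        rw [hT]; ring
      rw [this, Real.rpow_add two_pos, Real.rpow_mul (le_of_lt two_pos),
        Real.rpow_mul (le_of_lt two_pos), hlogb, hlogn]
    have h6 : (2:ℝ) ^ (E:ℝ) = (2:ℝ) ^ E := Real.rpow_natCast 2 E
    calc ((2 ^ (E - e) : ℕ) : ℝ) = (2:ℝ) ^ ((E - e : ℕ) : ℝ) := h1
      _ ≤ (2:ℝ) ^ ((E:ℝ) + (-T)) := le_trans h2 h3
      _ = (2:ℝ) ^ (E:ℝ) * (2:ℝ) ^ (-T) := h4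
      _ = (2:ℝ) ^ E * (b ^ (-(2 * a * k : ℝ)) * (n:ℝ) ^ (-(2 * b : ℝ))) := by
          rw [h5, h6]
  -- W is contained in the simpler witness set
  have hWW' : ∀ w ∈ W,
        4 ≤ w.1.card ∧ 2 ≤ w.2.card ∧ ∀ F ∈ w.2, F.1 ⊆ w.1 := by
    intro w hwW
    rw [hW, Finset.mem_filter] at hwW
    obtain ⟨-, hsub, hlt, hb1, hbn⟩ := hwW
    have hb1' : (1:ℝ) ≤ (w.1.card : ℝ) := by exact_mod_cast hb1
    have hT0 : (0:ℝ) ≤ 2 * ((w.2.card : ℝ) * (k : ℝ) * Real.logb 2 w.1.card +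
        (w.1.card : ℝ) * Real.logb 2 n) := by
      have l1 : (0:ℝ) ≤ Real.logb 2 w.1.card := Real.logb_nonneg (by norm_num) hb1'
      have l2 : (0:ℝ) ≤ Real.logb 2 n := Real.logb_nonneg (by norm_num) hn1
      have m1 : (0:ℝ) ≤ (w.2.card : ℝ) * (k : ℝ) := by positivity
      have m2 : (0:ℝ) ≤ (w.1.card : ℝ) := by positivity
      have q1 := mul_nonneg m1 l1
      have q2 := mul_nonneg m2 l2
      linarith
    have hepos : 0 < numDisjPairs w.2 := by
      have : (0:ℝ) < (numDisjPairs w.2 : ℝ) := lt_of_le_of_lt hT0 hlt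
      exact_mod_cast this
    have hne : (disjPairSet w.2).Nonempty := by
      apply Set.nonempty_of_ncard_ne_zero
      rw [← numDisjPairs_eq]; omega
    obtain ⟨p, F, hF, F', hF', hFne, hdisj, rfl⟩ := hne
    refine ⟨?_, ?_, hsub⟩
    · have hU : F.1 ∪ F'.1 ⊆ w.1 := Finset.union_subset (hsub F hF) (hsub F' hF')
      have hUc : (F.1 ∪ F'.1).card = 2 * k := by
        rw [Finset.card_union_of_disjoint hdisj, F.2, F'.2]; ring
      have := Finset.card_le_card hU
      omega
    · exact Finset.one_lt_card.2 ⟨F, hF, F', hF', hFne⟩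
  -- assemble
  rw [hbadcard]
  have step1 : ((Finset.univ.filter (fun G : SimpleGraph {A : Finset (Fin n) // A.card = k} =>
      G ≤ kneserGraph n k ∧ ¬ KP n k G)).card : ℝ) ≤
      ∑ w ∈ W, ((Finset.univ.filter
        (fun G : SimpleGraph {A : Finset (Fin n) // A.card = k} =>
          G ≤ kneserGraph n k ∧ ∀ F ∈ w.2, ∀ F' ∈ w.2, ¬ G.Adj F F')).card : ℝ) := by
    exact_mod_cast hcard
  have step2 := Finset.sum_le_sum hw
  have step3 : ∑ w ∈ W, (2:ℝ) ^ E * ((w.1.card : ℝ) ^ (-(2 * w.2.card * k : ℝ)) *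
      (n:ℝ) ^ (-(2 * w.1.card : ℝ))) ≤
      (2:ℝ) ^ E * (9 * (n:ℝ) ^ (-(4:ℝ))) := by
    rw [← Finset.mul_sum]
    exact mul_le_mul_of_nonneg_left (sum_witness_bound n k hk2 hkn W hWW')
      (le_of_lt (pow_pos two_pos E))
  calc ((Finset.univ.filter (fun G : SimpleGraph {A : Finset (Fin n) // A.card = k} =>
      G ≤ kneserGraph n k ∧ ¬ KP n k G)).card : ℝ)
      ≤ ∑ w ∈ W, (2:ℝ) ^ E * ((w.1.card : ℝ) ^ (-(2 * w.2.card * k : ℝ)) *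
        (n:ℝ) ^ (-(2 * w.1.card : ℝ))) := le_trans step1 step2
    _ ≤ (2:ℝ) ^ E * (9 * (n:ℝ) ^ (-(4:ℝ))) := step3
    _ = 9 * (n:ℝ) ^ (-(4:ℝ)) * 2 ^ E := by ring

lemma frac_bounds (k : ℕ → ℕ) (n : ℕ) (hk2 : 2 ≤ k n) (hkn : 2 * k n ≤ n) :
    1 - 9 * (n:ℝ) ^ (-(4:ℝ)) ≤ kneserFraction k (fun n => KP n (k n)) n ∧
    kneserFraction k (fun n => KP n (k n)) n ≤ 1 := by
  classical
  set E := Nat.card (kneserGraph n (k n)).edgeSet with hE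
  have hsplit : Nat.card {G : SimpleGraph {A : Finset (Fin n) // A.card = k n} //
        G ≤ kneserGraph n (k n) ∧ KP n (k n) G} +
      Nat.card {G : SimpleGraph {A : Finset (Fin n) // A.card = k n} //
        G ≤ kneserGraph n (k n) ∧ ¬ KP n (k n) G} = 2 ^ E := by
    rw [hE, ← card_all_subgraphs n (k n)]
    rw [Nat.card_eq_fintype_card, Nat.card_eq_fintype_card, Nat.card_eq_fintype_card,
      Fintype.card_subtype, Fintype.card_subtype, Fintype.card_subtype]
    have key := Finset.card_filter_add_card_filter_not
      (s := Finset.univ.filter (fun G : SimpleGraph {A : Finset (Fin n) // A.card = k n} =>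
        G ≤ kneserGraph n (k n))) (p := KP n (k n))
    simp only [Finset.filter_filter, Finset.filter_congr_decidable] at key ⊢
    exact key
  set good := Nat.card {G : SimpleGraph {A : Finset (Fin n) // A.card = k n} //
      G ≤ kneserGraph n (k n) ∧ KP n (k n) G} with hgood
  set bad := Nat.card {G : SimpleGraph {A : Finset (Fin n) // A.card = k n} //
      G ≤ kneserGraph n (k n) ∧ ¬ KP n (k n) G} with hbad
  have h2E : (0:ℝ) < 2 ^ E := by positivity
  have hfrac : kneserFraction k (fun n => KP n (k n)) n = (good : ℝ) / 2 ^ E := rfl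
  have hgoodR : (good : ℝ) = 2 ^ E - (bad : ℝ) := by
    have := hsplit
    have h2 : ((good + bad : ℕ) : ℝ) = ((2 ^ E : ℕ) : ℝ) := by rw [this]
    push_cast at h2
    linarith
  have hb9 := bad_le n (k n) hk2 hkn
  constructor
  · rw [hfrac, hgoodR]
    rw [sub_div, div_self (ne_of_gt h2E)]
    have : (bad : ℝ) / 2 ^ E ≤ 9 * (n:ℝ) ^ (-(4:ℝ)) := by
      rw [div_le_iff₀ h2E]
      exact hb9
    linarith
  · rw [hfrac, div_le_one h2E, hgoodR]
    have : (0:ℝ) ≤ (bad : ℝ) := by positivity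
    linarith

theorem independent_family_disjoint_pairs_bound' (k : ℕ → ℕ)
    (hk : ∀ᶠ n in atTop, 2 ≤ k n ∧ 2 * k n ≤ n) :
    kneserAAS k (fun n => KP n (k n)) := by
  show Tendsto (kneserFraction k (fun n => KP n (k n))) atTop (nhds 1)
  have ht : Tendsto (fun n : ℕ => (1:ℝ) - 9 * (n:ℝ) ^ (-(4:ℝ))) atTop (nhds 1) := by
    have h0 : Tendsto (fun n : ℕ => ((n:ℝ)) ^ (-(4:ℝ))) atTop (nhds 0) :=
      (tendsto_rpow_neg_atTop (by norm_num)).comp tendsto_natCast_atTop_atTop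
    have hc : Tendsto (fun _ : ℕ => (1:ℝ)) atTop (nhds 1) := tendsto_const_nhds
    have := hc.sub (h0.const_mul 9)
    simpa using this
  refine tendsto_of_tendsto_of_tendsto_of_le_of_le' ht tendsto_const_nhds ?_ ?_
  · exact hk.mono fun n hn => (frac_bounds k n hn.1 hn.2).1
  · exact hk.mono fun n hn => (frac_bounds k n hn.1 hn.2).2

/-- A.a.s., every family `𝒜` of `k(n)`-subsets of a `b`-element subset `B ⊆ [n]` that is
independent in `KG_{n,k(n)}(1/2)` satisfies `e(𝒜) ≤ 2(|𝒜|·k(n)·log₂ b + b·log₂ n)`. -/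
theorem independent_family_disjoint_pairs_bound (k : ℕ → ℕ)
    (hk : ∀ᶠ n in atTop, 2 ≤ k n ∧ 2 * k n ≤ n) :
    kneserAAS k (fun n G =>
      ∀ b : ℕ, 1 ≤ b → b ≤ n →
        ∀ B : Finset (Fin n), B.card = b →
          ∀ 𝒜 : Finset {A : Finset (Fin n) // A.card = k n},
            (∀ F ∈ 𝒜, F.1 ⊆ B) →
            (∀ F ∈ 𝒜, ∀ F' ∈ 𝒜, ¬ G.Adj F F') →
            (numDisjPairs 𝒜 : ℝ) ≤
              2 * ((𝒜.card : ℝ) * (k n : ℝ) * Real.logb 2 b +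
                (b : ℝ) * Real.logb 2 n)) := by
  exact independent_family_disjoint_pairs_bound' k hk
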